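/- For every real α > 1 and every integer n ≥ 2, the linear program obtained from the LP relaxation of capacitated domination on the star T(α) by omitting the constraints d(v)x(u) ≥ f(v,u) admits a feasible solution of objective value 1/α; hence its optimal value is at most 1/α. -/

import Mathlib

open Finset

variable {V : Type*} [Fintype V] [DecidableEq V]

/-- The closed neighborhood `N[v]` of a vertex. -/
def closedNbhd (G : SimpleGraph V) [DecidableRel G.Adj] (v : V) : Finset V :=
  insert v (G.neighborFinset v)

/-- A demand assignment: nonnegative, supported on closed neighborhoods. -/
def IsAssignment (G : SimpleGraph V) [DecidableRel G.Adj] (f : V → V → ℝ) : Prop :=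
  (∀ u v, 0 ≤ f u v) ∧ ∀ u v, v ∉ closedNbhd G u → f u v = 0

/-- Feasibility: the demand of every vertex is fully assigned. -/
def Feasible (G : SimpleGraph V) [DecidableRel G.Adj] (d : V → ℝ) (f : V → V → ℝ) : Prop :=
  IsAssignment G f ∧ ∀ u, d u ≤ ∑ v ∈ closedNbhd G u, f u v

/-- Multiplicity `x_f(v) = ⌈(Σ_{u∈N[v]} f(u,v))/c(v)⌉`. -/
noncomputable def mult (G : SimpleGraph V) [DecidableRel G.Adj] (c : V → ℝ)
    (f : V → V → ℝ) (v : V) : ℤ :=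
  ⌈(∑ u ∈ closedNbhd G v, f u v) / c v⌉

/-- Cost of a demand assignment. -/
noncomputable def cost (G : SimpleGraph V) [DecidableRel G.Adj] (w c : V → ℝ)
    (f : V → V → ℝ) : ℝ :=
  ∑ v, w v * (mult G c f v : ℝ)

/-- Optimal cost of a feasible demand assignment. -/
noncomputable def OPT (G : SimpleGraph V) [DecidableRel G.Adj] (w c d : V → ℝ) : ℝ :=
  sInf {r | ∃ f, Feasible G d f ∧ cost G w c f = r}

/-- Feasibility for the LP relaxation of capacitated domination. -/
def LPFeasible (G : SimpleGraph V) [DecidableRel G.Adj] (c d : V → ℝ)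
    (x : V → ℝ) (f : V → V → ℝ) : Prop :=
  (∀ u, 0 ≤ x u) ∧ IsAssignment G f ∧
  (∀ u, d u ≤ ∑ v ∈ closedNbhd G u, f u v) ∧
  (∀ u, ∑ v ∈ closedNbhd G u, f v u ≤ c u * x u) ∧
  (∀ u, ∀ v ∈ closedNbhd G u, f v u ≤ d v * x u)

/-- Optimal value `OPT_f(G)` of the LP relaxation. -/
noncomputable def OPTf (G : SimpleGraph V) [DecidableRel G.Adj] (w c d : V → ℝ) : ℝ :=
  sInf {r | ∃ x f, LPFeasible G c d x f ∧ ∑ u, w u * x u = r}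

/-- The `n`-vertex star with center `ctr`. -/
def starGraph (n : ℕ) (ctr : Fin n) : SimpleGraph (Fin n) where
  Adj u v := u ≠ v ∧ (u = ctr ∨ v = ctr)
  symm := ⟨fun u v h => ⟨h.1.symm, h.2.symm⟩⟩
  loopless := ⟨fun u h => h.1 rfl⟩

instance (n : ℕ) (ctr : Fin n) : DecidableRel (starGraph n ctr).Adj :=
  fun u v => inferInstanceAs (Decidable (u ≠ v ∧ (u = ctr ∨ v = ctr)))

/-- Feasibility for the LP relaxation of capacitated domination WITHOUT the
constraints `d(v)x(u) ≥ f(v,u)`. -/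
def RelaxedLPFeasible {V : Type*} [Fintype V] [DecidableEq V]
    (G : SimpleGraph V) [DecidableRel G.Adj] (c d : V → ℝ)
    (x : V → ℝ) (f : V → V → ℝ) : Prop :=
  (∀ u, 0 ≤ x u) ∧ IsAssignment G f ∧
  (∀ u, d u ≤ ∑ v ∈ closedNbhd G u, f u v) ∧
  (∀ u, ∑ v ∈ closedNbhd G u, f v u ≤ c u * x u)


lemma nbhd_ctr {n : ℕ} (ctr : Fin n) :
    closedNbhd (starGraph n ctr) ctr = Finset.univ := by
  ext v
  by_cases h : v = ctr <;>
    simp [closedNbhd, SimpleGraph.mem_neighborFinset, h, eq_comm] <;> simp [starGraph, h, eq_comm] <;>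
    exact fun h' => h h'.symm

lemma nbhd_petal {n : ℕ} (ctr p : Fin n) (hp : p ≠ ctr) :
    closedNbhd (starGraph n ctr) p = {p, ctr} := by
  ext v
  by_cases h : v = p <;> by_cases h2 : v = ctr <;>
    simp [closedNbhd, SimpleGraph.mem_neighborFinset, h, h2, hp, eq_comm] <;> simp [starGraph, h, h2, hp, eq_comm] <;>
    tauto

/-- on the star `T(α)` (unit costs and demands, capacity `n` at the
center and `αn` at the petals), the LP relaxation without the constraints
`d(v)x(u) ≥ f(v,u)` has a feasible solution of objective value `1/α`, hence
its optimal value is at most `1/α`. -/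
theorem relaxedLP_value_on_star (α : ℝ) (hα : 1 < α) (n : ℕ) (hn : 2 ≤ n) :
    (∃ x f, RelaxedLPFeasible (starGraph n ⟨0, by omega⟩)
        (fun v => if v = ⟨0, by omega⟩ then (n : ℝ) else α * n) (fun _ => 1) x f ∧
        ∑ u, (1 : ℝ) * x u = 1 / α) ∧
    sInf {r | ∃ x f, RelaxedLPFeasible (starGraph n ⟨0, by omega⟩)
        (fun v => if v = ⟨0, by omega⟩ then (n : ℝ) else α * n) (fun _ => 1) x f ∧
        ∑ u, (1 : ℝ) * x u = r} ≤ 1 / α := by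
  have hn1 : (1:ℝ) ≤ (n:ℝ) - 1 := by
    have : (2:ℝ) ≤ (n:ℝ) := by exact_mod_cast hn
    linarith
  have hn1' : (n:ℝ) - 1 ≠ 0 := by linarith
  have hα0 : (0:ℝ) < α := by linarith
  set ctr : Fin n := ⟨0, by omega⟩ with hctr
  set G := starGraph n ctr with hG
  set x : Fin n → ℝ := fun u => if u = ctr then 0 else 1 / (α * ((n:ℝ) - 1)) with hx
  set f : Fin n → Fin n → ℝ := fun u v =>
    if u = ctr then (if v = ctr then 0 else 1 / ((n:ℝ) - 1))
    else (if v = u then 1 else 0) with hf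
  have hxsum : ∑ u, (1:ℝ) * x u = 1 / α := by
    simp only [one_mul, hx]
    rw [Finset.sum_ite, Finset.sum_const, Finset.sum_const]
    have hc1 : (Finset.univ.filter (fun u : Fin n => u = ctr)).card = 1 := by
      rw [Finset.filter_eq']; simp
    have hc2 : (Finset.univ.filter (fun u : Fin n => ¬ u = ctr)).card = n - 1 := by
      rw [Finset.filter_not, Finset.filter_eq']
      simp [Finset.card_sdiff, Finset.card_univ]
    rw [hc1, hc2, smul_zero, nsmul_eq_mul]
    have : ((n - 1 : ℕ) : ℝ) = (n:ℝ) - 1 := by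
      have : (1:ℕ) ≤ n := by omega
      push_cast [this]; ring
    rw [this]
    field_simp
    ring
  have hfeas : RelaxedLPFeasible G (fun v => if v = ctr then (n : ℝ) else α * n)
      (fun _ => 1) x f := by
    refine ⟨?_, ⟨?_, ?_⟩, ?_, ?_⟩
    · intro u
      simp only [hx]
      split
      · exact le_refl 0
      · positivity
    · intro u v
      simp only [hf]
      split
      · split
        · exact le_refl 0
        · positivity
      · split
        · exact zero_le_one
        · exact le_refl 0
    · intro u v hv
      simp only [hf]
      by_cases hu : u = ctr
      · subst hu
        by_cases hvc : v = ctr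
        · simp [hvc]
        · exfalso; rw [nbhd_ctr] at hv; exact hv (Finset.mem_univ v)
      · by_cases hvu : v = u
        · exfalso
          apply hv
          rw [nbhd_petal ctr u hu, hvu]
          simp
        · simp [hu, hvu]
    · intro u
      by_cases hu : u = ctr
      · subst hu
        rw [nbhd_ctr]
        have : ∑ v, f ctr v = ∑ v, (if v = ctr then (0:ℝ) else 1 / ((n:ℝ) - 1)) := by
          apply Finset.sum_congr rfl
          intro v _
          simp [hf]
        rw [this, Finset.sum_ite, Finset.sum_const, Finset.sum_const]
        have hc2 : (Finset.univ.filter (fun u : Fin n => ¬ u = ctr)).card = n - 1 := by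
          rw [Finset.filter_not, Finset.filter_eq']
          simp [Finset.card_sdiff, Finset.card_univ]
        rw [hc2]
        have hcast : ((n - 1 : ℕ) : ℝ) = (n:ℝ) - 1 := by
          have : (1:ℕ) ≤ n := by omega
          push_cast [this]; ring
        rw [smul_zero, nsmul_eq_mul, hcast, zero_add, mul_one_div, div_self hn1']
      · rw [nbhd_petal ctr u hu, Finset.sum_pair hu]
        simp [hf, hu, Ne.symm hu]
    · intro u
      by_cases hu : u = ctr
      · subst hu
        rw [nbhd_ctr]
        have : ∑ v, f v ctr = 0 := by
          apply Finset.sum_eq_zero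
          intro v _
          by_cases hv : v = ctr
          · simp [hf, hv]
          · simp [hf, hv, Ne.symm hv]
        rw [this]
        simp [hx]
      · rw [nbhd_petal ctr u hu, Finset.sum_pair hu]
        have h1 : f u u = 1 := by simp [hf, hu]
        have h2 : f ctr u = 1 / ((n:ℝ) - 1) := by simp [hf, hu]
        rw [h1, h2]
        simp only [hx, if_neg hu]
        have hαne : α ≠ 0 := ne_of_gt hα0
        have heq : (α * n) * (1 / (α * ((n:ℝ)-1))) = 1 + 1/((n:ℝ)-1) := by
          field_simp
          ring
        rw [heq]
  have hex : (∃ x f, RelaxedLPFeasible G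
        (fun v => if v = ctr then (n : ℝ) else α * n) (fun _ => 1) x f ∧
        ∑ u, (1 : ℝ) * x u = 1 / α) := ⟨x, f, hfeas, hxsum⟩
  refine ⟨hex, ?_⟩
  apply csInf_le
  · refine ⟨0, ?_⟩
    rintro r ⟨x', f', hfe, rfl⟩
    exact Finset.sum_nonneg fun u _ => by simpa using hfe.1 u
  · exact ⟨x, f, hfeas, hxsum⟩
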